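/- Let P be a finite connected poset with at least two points and C = {a,b,v,w} a 4-crown contained in E(P) (a,b minimal in P, v,w maximal in P). Then C is a retract of P if and only if there exist partitions L(P) = A ⊔ B and U(P) = V ⊔ W with a ∈ A, b ∈ B, v ∈ V, w ∈ W such that no four-element subset F of E(P) meeting all four sets A, B, V, W is an improper 4-crown in E(P). -/

import Mathlib

def ConnectedPoset (α : Type*) [PartialOrder α] : Prop :=
  ∀ a b : α, Relation.ReflTransGen (fun u v : α => u ≤ v ∨ v ≤ u) a b

/-- The set of extremal points of a poset. -/
def EP (α : Type*) [PartialOrder α] : Set α := {z | IsMin z ∨ IsMax z}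

/-- `C` is a retract of the whole poset. -/
def IsRetract {α : Type*} [PartialOrder α] (C : Set α) : Prop :=
  ∃ r : α → α, Monotone r ∧ (∀ z, r (r z) = r z) ∧ Set.range r = C

/-- `{a,b,v,w}` is an improper 4-crown in `E(P)`. -/
def IsImproper4CrownE {α : Type*} [PartialOrder α] (a b v w : α) : Prop :=
  IsMin a ∧ IsMin b ∧ a ≠ b ∧ IsMax v ∧ IsMax w ∧ v ≠ w ∧
  a < v ∧ a < w ∧ b < v ∧ b < w ∧
  ∃ m : α, a < m ∧ b < m ∧ m < v ∧ m < w

/-- Auxiliary: construct the retraction from suitable partitions. -/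
lemma crown_retract_of_partition {α : Type*} [PartialOrder α] [Fintype α]
    {a b v w : α} {A B V W : Set α}
    (ha : IsMin a) (hb : IsMin b) (hw : IsMax w)
    (hav : a < v) (haw : a < w) (hbv : b < v) (hbw : b < w)
    (haA : a ∈ A) (hbB : b ∈ B) (hvV : v ∈ V) (hwW : w ∈ W)
    (hABu : A ∪ B = {z : α | IsMin z}) (hABd : Disjoint A B)
    (hVWd : Disjoint V W)
    (hVWu : V ∪ W = {z : α | IsMax z})
    (excl : ∀ z : α, (∃ p ∈ A, p ≤ z) → (∃ p ∈ B, p ≤ z) →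
      (∃ q ∈ V, z ≤ q) → (∃ q ∈ W, z ≤ q) → False) :
    IsRetract ({a, b, v, w} : Set α) := by
  classical
  have tot1 : ∀ z : α, (∃ p ∈ A, p ≤ z) ∨ (∃ p ∈ B, p ≤ z) := by
    intro z
    obtain ⟨m, hm, hmin⟩ : ∃ m ∈ Finset.univ.filter (· ≤ z),
        ∀ x ∈ Finset.univ.filter (· ≤ z), ¬ x < m := by
      obtain ⟨m, hm, hmin⟩ := Finset.exists_minimal
        (s := Finset.univ.filter (· ≤ z)) ⟨z, by simp⟩
      exact ⟨m, hm, fun x hx hlt => hlt.not_ge (hmin hx hlt.le)⟩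
    have hmz : m ≤ z := (Finset.mem_filter.1 hm).2
    have hmmin : IsMin m := by
      intro c hc
      rcases eq_or_lt_of_le hc with h | h
      · exact le_of_eq h.symm
      · exact absurd h (hmin c (Finset.mem_filter.2 ⟨Finset.mem_univ _, hc.trans hmz⟩))
    have hmem : m ∈ A ∪ B := by rw [hABu]; exact hmmin
    rcases hmem with h | h
    · exact Or.inl ⟨m, h, hmz⟩
    · exact Or.inr ⟨m, h, hmz⟩
  have tot2 : ∀ z : α, (∃ q ∈ V, z ≤ q) ∨ (∃ q ∈ W, z ≤ q) := by
    intro z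
    obtain ⟨m, hm, hmax⟩ : ∃ m ∈ Finset.univ.filter (z ≤ ·),
        ∀ x ∈ Finset.univ.filter (z ≤ ·), ¬ m < x := by
      obtain ⟨m, hm, hmax⟩ := Finset.exists_maximal
        (s := Finset.univ.filter (z ≤ ·)) ⟨z, by simp⟩
      exact ⟨m, hm, fun x hx hlt => hlt.not_ge (hmax hx hlt.le)⟩
    have hmz : z ≤ m := (Finset.mem_filter.1 hm).2
    have hmmax : IsMax m := by
      intro c hc
      rcases eq_or_lt_of_le hc with h | h
      · exact le_of_eq h.symm
      · exact absurd h (hmax c (Finset.mem_filter.2 ⟨Finset.mem_univ _, hmz.trans hc⟩))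
    have hmem : m ∈ V ∪ W := by rw [hVWu]; exact hmmax
    rcases hmem with h | h
    · exact Or.inl ⟨m, h, hmz⟩
    · exact Or.inr ⟨m, h, hmz⟩
  set r : α → α := fun z =>
    if (∃ p ∈ A, p ≤ z) ∧ (∃ p ∈ B, p ≤ z) then (if ∃ q ∈ V, z ≤ q then v else w)
    else if ∃ p ∈ A, p ≤ z then a else b with hrdef
  have hr1 : ∀ z, ((∃ p ∈ A, p ≤ z) ∧ (∃ p ∈ B, p ≤ z)) → (∃ q ∈ V, z ≤ q) → r z = v := by
    intro z h1 h2; simp only [hrdef]; rw [if_pos h1, if_pos h2]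
  have hr2 : ∀ z, ((∃ p ∈ A, p ≤ z) ∧ (∃ p ∈ B, p ≤ z)) → ¬(∃ q ∈ V, z ≤ q) → r z = w := by
    intro z h1 h2; simp only [hrdef]; rw [if_pos h1, if_neg h2]
  have hr3 : ∀ z, ¬((∃ p ∈ A, p ≤ z) ∧ (∃ p ∈ B, p ≤ z)) → (∃ p ∈ A, p ≤ z) → r z = a := by
    intro z h1 h2; simp only [hrdef]; rw [if_neg h1, if_pos h2]
  have hr4 : ∀ z, ¬((∃ p ∈ A, p ≤ z) ∧ (∃ p ∈ B, p ≤ z)) → ¬(∃ p ∈ A, p ≤ z) → r z = b := by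
    intro z h1 h2; simp only [hrdef]; rw [if_neg h1, if_neg h2]
  have hmono : Monotone r := by
    intro z z' hzz'
    have mSA : (∃ p ∈ A, p ≤ z) → (∃ p ∈ A, p ≤ z') := by
      rintro ⟨p, hp, h⟩; exact ⟨p, hp, h.trans hzz'⟩
    have mSB : (∃ p ∈ B, p ≤ z) → (∃ p ∈ B, p ≤ z') := by
      rintro ⟨p, hp, h⟩; exact ⟨p, hp, h.trans hzz'⟩
    have aSV : (∃ q ∈ V, z' ≤ q) → (∃ q ∈ V, z ≤ q) := by
      rintro ⟨q, hq, h⟩; exact ⟨q, hq, hzz'.trans h⟩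
    have aSW : (∃ q ∈ W, z' ≤ q) → (∃ q ∈ W, z ≤ q) := by
      rintro ⟨q, hq, h⟩; exact ⟨q, hq, hzz'.trans h⟩
    by_cases h1 : (∃ p ∈ A, p ≤ z) ∧ (∃ p ∈ B, p ≤ z)
    · have h1' : (∃ p ∈ A, p ≤ z') ∧ (∃ p ∈ B, p ≤ z') := ⟨mSA h1.1, mSB h1.2⟩
      by_cases h2 : ∃ q ∈ V, z' ≤ q
      · rw [hr1 z h1 (aSV h2), hr1 z' h1' h2]
      · have hW' : ∃ q ∈ W, z' ≤ q := (tot2 z').resolve_left h2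
        have hWz : ∃ q ∈ W, z ≤ q := aSW hW'
        have hVz : ¬ ∃ q ∈ V, z ≤ q := fun hV => excl z h1.1 h1.2 hV hWz
        rw [hr2 z h1 hVz, hr2 z' h1' h2]
    · by_cases hA : ∃ p ∈ A, p ≤ z
      · rw [hr3 z h1 hA]
        by_cases h1' : (∃ p ∈ A, p ≤ z') ∧ (∃ p ∈ B, p ≤ z')
        · by_cases h2 : ∃ q ∈ V, z' ≤ q
          · rw [hr1 z' h1' h2]; exact hav.le
          · rw [hr2 z' h1' h2]; exact haw.le
        · rw [hr3 z' h1' (mSA hA)]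
      · have hBz : ∃ p ∈ B, p ≤ z := (tot1 z).resolve_left hA
        rw [hr4 z h1 hA]
        by_cases h1' : (∃ p ∈ A, p ≤ z') ∧ (∃ p ∈ B, p ≤ z')
        · by_cases h2 : ∃ q ∈ V, z' ≤ q
          · rw [hr1 z' h1' h2]; exact hbv.le
          · rw [hr2 z' h1' h2]; exact hbw.le
        · have hA' : ¬ ∃ p ∈ A, p ≤ z' := fun h => h1' ⟨h, mSB hBz⟩
          rw [hr4 z' h1' hA']
  have hfa : r a = a := by
    have hnB : ¬ ∃ p ∈ B, p ≤ a := by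
      rintro ⟨p, hp, hpa⟩
      have hpe : p = a := le_antisymm hpa (ha hpa)
      exact (Set.disjoint_left.1 hABd haA) (hpe ▸ hp)
    exact hr3 a (fun h => hnB h.2) ⟨a, haA, le_rfl⟩
  have hfb : r b = b := by
    have hnA : ¬ ∃ p ∈ A, p ≤ b := by
      rintro ⟨p, hp, hpb⟩
      have hpe : p = b := le_antisymm hpb (hb hpb)
      exact (Set.disjoint_left.1 hABd (hpe ▸ hp)) hbB
    exact hr4 b (fun h => hnA h.1) hnA
  have hfv : r v = v := hr1 v ⟨⟨a, haA, hav.le⟩, ⟨b, hbB, hbv.le⟩⟩ ⟨v, hvV, le_rfl⟩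
  have hfw : r w = w := by
    have hnV : ¬ ∃ q ∈ V, w ≤ q := by
      rintro ⟨q, hq, hwq⟩
      have hqe : q = w := le_antisymm (hw hwq) hwq
      exact (Set.disjoint_left.1 hVWd (hqe ▸ hq)) hwW
    exact hr2 w ⟨⟨a, haA, haw.le⟩, ⟨b, hbB, hbw.le⟩⟩ hnV
  have hmem : ∀ z, r z ∈ ({a, b, v, w} : Set α) := by
    intro z
    by_cases h1 : (∃ p ∈ A, p ≤ z) ∧ (∃ p ∈ B, p ≤ z)
    · by_cases h2 : ∃ q ∈ V, z ≤ q
      · rw [hr1 z h1 h2]; simp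
      · rw [hr2 z h1 h2]; simp
    · by_cases hA : ∃ p ∈ A, p ≤ z
      · rw [hr3 z h1 hA]; simp
      · rw [hr4 z h1 hA]; simp
  refine ⟨r, hmono, ?_, ?_⟩
  · intro z
    have h := hmem z
    simp only [Set.mem_insert_iff, Set.mem_singleton_iff] at h
    rcases h with h | h | h | h <;> rw [h]
    exacts [hfa, hfb, hfv, hfw]
  · apply Set.eq_of_subset_of_subset
    · rintro _ ⟨z, rfl⟩; exact hmem z
    · intro x hx
      simp only [Set.mem_insert_iff, Set.mem_singleton_iff] at hx
      rcases hx with rfl | rfl | rfl | rfl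
      exacts [⟨_, hfa⟩, ⟨_, hfb⟩, ⟨_, hfv⟩, ⟨_, hfw⟩]

/-- a 4-crown `C = {a,b,v,w} ⊆ E(P)` is a retract of `P` iff
there are partitions `L(P) = A ⊔ B`, `U(P) = V ⊔ W` with `a ∈ A`, `b ∈ B`,
`v ∈ V`, `w ∈ W` such that no four-element subset of `E(P)` meeting all of
`A,B,V,W` is an improper 4-crown in `E(P)`. -/
theorem stmt8 {α : Type*} [PartialOrder α] [Fintype α]
    (hconn : ConnectedPoset α) (htwo : ∃ x y : α, x ≠ y)
    (a b v w : α)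
    (ha : IsMin a) (hb : IsMin b) (hab : a ≠ b)
    (hv : IsMax v) (hw : IsMax w) (hvw : v ≠ w)
    (hav : a < v) (haw : a < w) (hbv : b < v) (hbw : b < w) :
    IsRetract ({a, b, v, w} : Set α) ↔
    ∃ A B V W : Set α,
      a ∈ A ∧ b ∈ B ∧ v ∈ V ∧ w ∈ W ∧
      A ∪ B = {z : α | IsMin z} ∧ Disjoint A B ∧
      V ∪ W = {z : α | IsMax z} ∧ Disjoint V W ∧
      ∀ F : Set α, F ⊆ EP α → F.ncard = 4 →
        (F ∩ A).Nonempty → (F ∩ B).Nonempty → (F ∩ V).Nonempty → (F ∩ W).Nonempty →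
        ¬ ∃ a' b' v' w' : α, F = {a', b', v', w'} ∧ IsImproper4CrownE a' b' v' w' := by
  classical
  constructor
  · rintro ⟨r, hmono, hidem, hrange⟩
    have hfix : ∀ z, z ∈ ({a, b, v, w} : Set α) → r z = z := by
      intro z hz
      rw [← hrange] at hz
      obtain ⟨u, rfl⟩ := hz
      exact hidem u
    have hra : r a = a := hfix a (by simp)
    have hrb : r b = b := hfix b (by simp)
    have hrv : r v = v := hfix v (by simp)
    have hrw : r w = w := hfix w (by simp)
    have hrmem : ∀ z, r z ∈ ({a, b, v, w} : Set α) := fun z => hrange ▸ Set.mem_range_self z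
    refine ⟨{z | IsMin z ∧ r z ≠ b}, {z | IsMin z ∧ r z = b},
            {z | IsMax z ∧ r z ≠ w}, {z | IsMax z ∧ r z = w},
            ⟨ha, by rw [hra]; exact hab⟩, ⟨hb, hrb⟩,
            ⟨hv, by rw [hrv]; exact hvw⟩, ⟨hw, hrw⟩, ?_, ?_, ?_, ?_, ?_⟩
    · ext z; simp only [Set.mem_union, Set.mem_setOf_eq]; tauto
    · rw [Set.disjoint_left]; rintro z ⟨_, h1⟩ ⟨_, h2⟩; exact h1 h2
    · ext z; simp only [Set.mem_union, Set.mem_setOf_eq]; tauto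
    · rw [Set.disjoint_left]; rintro z ⟨_, h1⟩ ⟨_, h2⟩; exact h1 h2
    · intro F hFE hF4 hFA hFB hFV hFW
      rintro ⟨p, q, s, t, rfl, hpmin, hqmin, hpq, hsmax, htmax, hst,
        hps, hpt, hqs, hqt, m, hpm, hqm, hms, hmt⟩
      have key : ∀ p' q' s' t' m' : α, r p' ≠ b → r q' = b → r s' ≠ w → r t' = w →
          q' < m' → m' < s' → m' < t' → p' < m' → False := by
        intro p' q' s' t' m' hp' hq' hs' ht' hqm' hms' hmt' hpm'
        have h1 : b ≤ r m' := by rw [← hq']; exact hmono hqm'.le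
        have h2 : r m' ≤ w := by rw [← ht']; exact hmono hmt'.le
        have h3 := hrmem m'
        simp only [Set.mem_insert_iff, Set.mem_singleton_iff] at h3
        rcases h3 with h | h | h | h
        · rw [h] at h1; exact hab (le_antisymm (ha h1) h1)
        · have h4 : r p' ≤ b := by rw [← h]; exact hmono hpm'.le
          have h5 := hrmem p'
          simp only [Set.mem_insert_iff, Set.mem_singleton_iff] at h5
          rcases h5 with h' | h' | h' | h'
          · rw [h'] at h4; exact hab (le_antisymm h4 (hb h4))
          · exact hp' h'
          · rw [h'] at h4; exact hbv.ne (le_antisymm h4 (hb h4)).symm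
          · rw [h'] at h4; exact hbw.ne (le_antisymm h4 (hb h4)).symm
        · rw [h] at h2; exact hvw (le_antisymm h2 (hv h2))
        · have h4 : r m' ≤ r s' := hmono hms'.le
          rw [h] at h4
          exact hs' (le_antisymm (hw h4) h4)
      have hsplitAB : (r p ≠ b ∧ r q = b) ∨ (r q ≠ b ∧ r p = b) := by
        obtain ⟨x, hxF, hxmin, hxb⟩ := hFA
        obtain ⟨y, hyF, hymin, hyb⟩ := hFB
        simp only [Set.mem_insert_iff, Set.mem_singleton_iff] at hxF hyF
        have hxpq : x = p ∨ x = q := by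
          rcases hxF with h | h | h | h
          · exact Or.inl h
          · exact Or.inr h
          · subst h; exact ((hps.trans_le (hxmin hps.le)).false).elim
          · subst h; exact ((hpt.trans_le (hxmin hpt.le)).false).elim
        have hypq : y = p ∨ y = q := by
          rcases hyF with h | h | h | h
          · exact Or.inl h
          · exact Or.inr h
          · subst h; exact ((hps.trans_le (hymin hps.le)).false).elim
          · subst h; exact ((hpt.trans_le (hymin hpt.le)).false).elim
        rcases hxpq with rfl | rfl <;> rcases hypq with rfl | rfl
        · exact (hxb hyb).elim
        · exact Or.inl ⟨hxb, hyb⟩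
        · exact Or.inr ⟨hxb, hyb⟩
        · exact (hxb hyb).elim
      have hsplitVW : (r s ≠ w ∧ r t = w) ∨ (r t ≠ w ∧ r s = w) := by
        obtain ⟨x, hxF, hxmax, hxw⟩ := hFV
        obtain ⟨y, hyF, hymax, hyw⟩ := hFW
        simp only [Set.mem_insert_iff, Set.mem_singleton_iff] at hxF hyF
        have hxst : x = s ∨ x = t := by
          rcases hxF with h | h | h | h
          · subst h; exact ((hps.trans_le' (hxmax hps.le)).false).elim
          · subst h; exact ((hqs.trans_le' (hxmax hqs.le)).false).elim
          · exact Or.inl h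
          · exact Or.inr h
        have hyst : y = s ∨ y = t := by
          rcases hyF with h | h | h | h
          · subst h; exact ((hps.trans_le' (hymax hps.le)).false).elim
          · subst h; exact ((hqs.trans_le' (hymax hqs.le)).false).elim
          · exact Or.inl h
          · exact Or.inr h
        rcases hxst with rfl | rfl <;> rcases hyst with rfl | rfl
        · exact (hxw hyw).elim
        · exact Or.inl ⟨hxw, hyw⟩
        · exact Or.inr ⟨hxw, hyw⟩
        · exact (hxw hyw).elim
      rcases hsplitAB with ⟨h1, h2⟩ | ⟨h1, h2⟩ <;> rcases hsplitVW with ⟨h3, h4⟩ | ⟨h3, h4⟩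
      · exact key p q s t m h1 h2 h3 h4 hqm hms hmt hpm
      · exact key p q t s m h1 h2 h3 h4 hqm hmt hms hpm
      · exact key q p s t m h1 h2 h3 h4 hpm hms hmt hqm
      · exact key q p t s m h1 h2 h3 h4 hpm hmt hms hqm
  · rintro ⟨A, B, V, W, haA, hbB, hvV, hwW, hABu, hABd, hVWu, hVWd, hF⟩
    have hAmin : ∀ z ∈ A, IsMin z := by
      intro z hz
      have h : z ∈ A ∪ B := Or.inl hz
      rw [hABu] at h; exact h
    have hBmin : ∀ z ∈ B, IsMin z := by
      intro z hz
      have h : z ∈ A ∪ B := Or.inr hz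
      rw [hABu] at h; exact h
    have hVmax : ∀ z ∈ V, IsMax z := by
      intro z hz
      have h : z ∈ V ∪ W := Or.inl hz
      rw [hVWu] at h; exact h
    have hWmax : ∀ z ∈ W, IsMax z := by
      intro z hz
      have h : z ∈ V ∪ W := Or.inr hz
      rw [hVWu] at h; exact h
    apply crown_retract_of_partition ha hb hw hav haw hbv hbw haA hbB hvV hwW hABu hABd
      hVWd hVWu
    rintro z ⟨p, hpA, hpz⟩ ⟨q, hqB, hqz⟩ ⟨s, hsV, hzs⟩ ⟨t, htW, hzt⟩
    have hpmin : IsMin p := hAmin p hpA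
    have hqmin : IsMin q := hBmin q hqB
    have hsmax : IsMax s := hVmax s hsV
    have htmax : IsMax t := hWmax t htW
    by_cases hzmin : IsMin z
    · have hpe : p = z := le_antisymm hpz (hzmin hpz)
      have hqe : q = z := le_antisymm hqz (hzmin hqz)
      exact (Set.disjoint_left.1 hABd (hpe ▸ hpA)) (hqe ▸ hqB)
    by_cases hzmax : IsMax z
    · have hse : s = z := le_antisymm (hzmax hzs) hzs
      have hte : t = z := le_antisymm (hzmax hzt) hzt
      exact (Set.disjoint_left.1 hVWd (hse ▸ hsV)) (hte ▸ htW)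
    have hpz' : p < z := lt_of_le_of_ne hpz (by rintro rfl; exact hzmin hpmin)
    have hqz' : q < z := lt_of_le_of_ne hqz (by rintro rfl; exact hzmin hqmin)
    have hzs' : z < s := lt_of_le_of_ne hzs (by rintro rfl; exact hzmax hsmax)
    have hzt' : z < t := lt_of_le_of_ne hzt (by rintro rfl; exact hzmax htmax)
    have hpq : p ≠ q := by rintro rfl; exact (Set.disjoint_left.1 hABd hpA) hqB
    have hst : s ≠ t := by rintro rfl; exact (Set.disjoint_left.1 hVWd hsV) htW
    have hps : p < s := hpz'.trans hzs'
    have hpt : p < t := hpz'.trans hzt'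
    have hqs : q < s := hqz'.trans hzs'
    have hqt : q < t := hqz'.trans hzt'
    have hpns : p ≠ s := hps.ne
    have hpnt : p ≠ t := hpt.ne
    have hqns : q ≠ s := hqs.ne
    have hqnt : q ≠ t := hqt.ne
    refine hF {p, q, s, t} ?_ ?_ ⟨p, by simp, hpA⟩ ⟨q, by simp, hqB⟩
      ⟨s, by simp, hsV⟩ ⟨t, by simp, htW⟩
      ⟨p, q, s, t, rfl, hpmin, hqmin, hpq, hsmax, htmax, hst,
        hps, hpt, hqs, hqt, z, hpz', hqz', hzs', hzt'⟩
    · intro x hx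
      simp only [Set.mem_insert_iff, Set.mem_singleton_iff] at hx
      rcases hx with rfl | rfl | rfl | rfl
      exacts [Or.inl hpmin, Or.inl hqmin, Or.inr hsmax, Or.inr htmax]
    · rw [Set.ncard_insert_of_notMem (by simp [hpq, hpns, hpnt]) (Set.toFinite _),
          Set.ncard_insert_of_notMem (by simp [hqns, hqnt]) (Set.toFinite _),
          Set.ncard_pair hst]
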